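/- Let f be a monotone submodular function on subsets of a finite set V with f(∅) = 0, and let OPT be any subset of size at most k_opt. Define a greedy sequence S_0 = ∅ and S_{j+1} = S_j ∪ {v_{j+1}} where v_{j+1} maximizes the marginal gain f(S_j ∪ {v}) - f(S_j) over v ∈ V. Then for every j ≥ 0, f(S_j) ≥ (1 - (1 - 1/k_opt)^j) · f(OPT). -/

import Mathlib

lemma marginal_sum_bound {α : Type*} [DecidableEq α]
    (f : Finset α → ℝ)
    (hmono : ∀ A B : Finset α, A ⊆ B → f A ≤ f B)
    (hsub : ∀ A B : Finset α, A ⊆ B → ∀ v ∉ B,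
      f (insert v B) - f B ≤ f (insert v A) - f A)
    (A : Finset α) : ∀ T : Finset α,
    f (A ∪ T) ≤ f A + ∑ v ∈ T, (f (insert v A) - f A) := by
  intro T
  induction T using Finset.induction_on with
  | empty => simp
  | @insert a s ha ih =>
    have hstep : f (insert a (A ∪ s)) - f (A ∪ s) ≤ f (insert a A) - f A := by
      by_cases hmem : a ∈ A ∪ s
      · rw [Finset.insert_eq_self.mpr hmem]
        have := hmono A (insert a A) (Finset.subset_insert a A)
        linarith
      · exact hsub A (A ∪ s) Finset.subset_union_left a hmem
    rw [Finset.union_insert, Finset.sum_insert ha]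
    linarith

theorem greedy_submodular_bound {α : Type*} [DecidableEq α] [Fintype α]
    (f : Finset α → ℝ)
    (hnonneg : ∀ S, 0 ≤ f S)
    (hempty : f ∅ = 0)
    (hmono : ∀ A B : Finset α, A ⊆ B → f A ≤ f B)
    (hsub : ∀ A B : Finset α, A ⊆ B → ∀ v ∉ B,
      f (insert v B) - f B ≤ f (insert v A) - f A)
    (kopt : ℕ) (hkopt : 1 ≤ kopt) (OPT : Finset α) (hOPT : OPT.card ≤ kopt)
    (S : ℕ → Finset α) (hS0 : S 0 = ∅)
    (hgreedy : ∀ j, ∃ v : α, S (j + 1) = insert v (S j) ∧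
      ∀ u : α, f (insert u (S j)) - f (S j) ≤ f (insert v (S j)) - f (S j)) :
    ∀ j : ℕ, (1 - (1 - 1 / (kopt : ℝ)) ^ j) * f OPT ≤ f (S j) := by
  have hk0 : (0:ℝ) < (kopt:ℝ) := by exact_mod_cast hkopt
  set r : ℝ := 1 - 1 / (kopt : ℝ) with hr
  have hr0 : 0 ≤ r := by
    have h : 1 / (kopt:ℝ) ≤ 1 := by
      rw [div_le_one hk0]; exact_mod_cast hkopt
    rw [hr]; linarith
  -- key step inequality
  have key : ∀ j, f OPT - f (S j) ≤ (kopt:ℝ) * (f (S (j+1)) - f (S j)) := by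
    intro j
    obtain ⟨v, hv, hvmax⟩ := hgreedy j
    rcases OPT.eq_empty_or_nonempty with hO | ⟨w, hw⟩
    · rw [hO, hempty]
      have h1 : f (S j) ≤ f (S (j+1)) := by
        rw [hv]; exact hmono _ _ (Finset.subset_insert _ _)
      nlinarith [hnonneg (S j)]
    · have hgain0 : 0 ≤ f (insert v (S j)) - f (S j) := by
        have := hvmax w
        have := hmono (S j) (insert w (S j)) (Finset.subset_insert _ _)
        linarith
      have h1 : f OPT ≤ f (S j ∪ OPT) := hmono _ _ Finset.subset_union_right
      have h2 := marginal_sum_bound f hmono hsub (S j) OPT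
      have h3 : ∑ u ∈ OPT, (f (insert u (S j)) - f (S j))
          ≤ ∑ _u ∈ OPT, (f (insert v (S j)) - f (S j)) :=
        Finset.sum_le_sum (fun u _ => hvmax u)
      have h4 : ∑ _u ∈ OPT, (f (insert v (S j)) - f (S j))
          = (OPT.card : ℝ) * (f (insert v (S j)) - f (S j)) := by
        simp [Finset.sum_const, nsmul_eq_mul]
        ring
      have h5 : (OPT.card : ℝ) ≤ (kopt : ℝ) := by exact_mod_cast hOPT
      have h6 : (OPT.card : ℝ) * (f (insert v (S j)) - f (S j))
          ≤ (kopt:ℝ) * (f (insert v (S j)) - f (S j)) :=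
        mul_le_mul_of_nonneg_right h5 hgain0
      rw [hv]
      linarith
  intro j
  induction j with
  | zero => simp [hS0, hempty]
  | succ j ih =>
    have hk := key j
    -- f (S (j+1)) ≥ r * f(S j) + (1/kopt) * f OPT
    have hstep : r * f (S j) + (1 / (kopt:ℝ)) * f OPT ≤ f (S (j+1)) := by
      have hki : (1/(kopt:ℝ)) * ((kopt:ℝ) * (f (S (j+1)) - f (S j)))
          = f (S (j+1)) - f (S j) := by
        field_simp
      have := mul_le_mul_of_nonneg_left hk (by positivity : (0:ℝ) ≤ 1/(kopt:ℝ))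
      rw [hki] at this
      have hrexp : r * f (S j) = f (S j) - (1/(kopt:ℝ)) * f (S j) := by ring
      rw [hrexp]; linarith
    have hih : r * ((1 - r ^ j) * f OPT) ≤ r * f (S j) :=
      mul_le_mul_of_nonneg_left ih hr0
    have : (1 - r ^ (j+1)) * f OPT
        = r * ((1 - r ^ j) * f OPT) + (1/(kopt:ℝ)) * f OPT := by
      rw [hr]; ring
    linarith [this ▸ add_le_add hih (le_refl ((1/(kopt:ℝ)) * f OPT))]
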